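/- Assume 0 ≤ c ≤ 1 and L ≥ 1. Then for every item i and every k : Fin K, the truncated personalized PageRank value of the rank-(k+1) recommended item satisfies Ŝ_i (P i k) ≥ (1−c) · c / (D · log(k+2)). -/

import Mathlib

open Finset Matrix

/-- The normalizing constant `D = ∑_{r=1}^{K} 1 / log (r+1)`. -/
noncomputable def Dconst (K : ℕ) : ℝ := ∑ r ∈ Finset.Icc 1 K, 1 / Real.log ((r : ℝ) + 1)

/-- The weighted adjacency matrix of the recommendation network: `A i j = 1 / log (k+2)` if
`P i k = j` for some (necessarily unique, by injectivity) rank `k : Fin K`, and `0` otherwise. -/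
noncomputable def adj {n K : ℕ} (P : Fin n → Fin K → Fin n) :
    Matrix (Fin n) (Fin n) ℝ := fun i j =>
  ∑ k : Fin K, if P i k = j then 1 / Real.log (((k : ℕ) : ℝ) + 2) else 0

/-- The row-normalized adjacency matrix `Ã = D⁻¹ • A`. -/
noncomputable def normAdj {n K : ℕ} (P : Fin n → Fin K → Fin n) :
    Matrix (Fin n) (Fin n) ℝ :=
  (Dconst K)⁻¹ • adj P

/-- The truncated personalized PageRank vector
`Ŝ_i = (1-c) • ((∑_{k=0}^{L} (c • Ãᵀ)^k) *ᵥ e_i)`. -/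
noncomputable def pprTrunc {n K : ℕ} (P : Fin n → Fin K → Fin n) (c : ℝ) (L : ℕ)
    (i : Fin n) : Fin n → ℝ :=
  (1 - c) • ((∑ k ∈ Finset.range (L + 1), (c • (normAdj P)ᵀ) ^ k) *ᵥ Pi.single i 1)

lemma log_pos_aux (k : ℕ) : 0 < Real.log ((k : ℝ) + 2) := by
  apply Real.log_pos
  have : (0:ℝ) ≤ (k:ℝ) := Nat.cast_nonneg k
  linarith

lemma Dconst_nonneg (K : ℕ) : 0 ≤ Dconst K := by
  apply Finset.sum_nonneg
  intro r hr
  simp only [Finset.mem_Icc] at hr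
  have h1 : (1:ℝ) < (r:ℝ) + 1 := by
    have : (1:ℝ) ≤ (r:ℝ) := by exact_mod_cast hr.1
    linarith
  exact le_of_lt (div_pos one_pos (Real.log_pos h1))

lemma Dconst_pos {K : ℕ} (hK : 1 ≤ K) : 0 < Dconst K := by
  apply Finset.sum_pos
  · intro r hr
    simp only [Finset.mem_Icc] at hr
    have h1 : (1:ℝ) < (r:ℝ) + 1 := by
      have : (1:ℝ) ≤ (r:ℝ) := by exact_mod_cast hr.1
      linarith
    exact div_pos one_pos (Real.log_pos h1)
  · exact ⟨1, Finset.mem_Icc.mpr ⟨le_refl 1, hK⟩⟩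

lemma adj_nonneg {n K : ℕ} (P : Fin n → Fin K → Fin n) (i j : Fin n) : 0 ≤ adj P i j := by
  apply Finset.sum_nonneg
  intro l _
  split
  · exact le_of_lt (div_pos one_pos (log_pos_aux l))
  · exact le_refl 0

lemma normAdj_nonneg {n K : ℕ} (P : Fin n → Fin K → Fin n) (i j : Fin n) :
    0 ≤ normAdj P i j :=
  mul_nonneg (inv_nonneg.mpr (Dconst_nonneg K)) (adj_nonneg P i j)

lemma pow_entry_nonneg {n : ℕ} (M : Matrix (Fin n) (Fin n) ℝ) (hM : ∀ i j, 0 ≤ M i j)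
    (m : ℕ) : ∀ i j, 0 ≤ (M ^ m) i j := by
  induction m with
  | zero =>
    intro i j
    simp only [pow_zero, Matrix.one_apply]
    split <;> norm_num
  | succ m ih =>
    intro i j
    rw [pow_succ, Matrix.mul_apply]
    exact Finset.sum_nonneg fun l _ => mul_nonneg (ih i l) (hM l j)

/-- Lower bound on the truncated personalized PageRank value of a recommended item:
`Ŝ_i (P i k) ≥ (1-c) · c / (D · log (k+2))`. -/
theorem pprTrunc_lower_bound
    (n K : ℕ) (hK : 1 ≤ K) (P : Fin n → Fin K → Fin n)
    (hinj : ∀ i, Function.Injective (P i))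
    (hne : ∀ i k, P i k ≠ i)
    (c : ℝ) (hc0 : 0 ≤ c) (hc1 : c ≤ 1) (L : ℕ) (hL : 1 ≤ L)
    (i : Fin n) (k : Fin K) :
    (1 - c) * c / (Dconst K * Real.log (((k : ℕ) : ℝ) + 2)) ≤ pprTrunc P c L i (P i k) := by
  set j := P i k with hj
  have hD := Dconst_pos hK
  have hlog := log_pos_aux (k : ℕ)
  set M := c • (normAdj P)ᵀ with hM
  have hMnn : ∀ a b, 0 ≤ M a b := fun a b =>
    mul_nonneg hc0 (normAdj_nonneg P b a)
  have hval : pprTrunc P c L i j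
      = (1 - c) * (∑ m ∈ Finset.range (L + 1), (M ^ m) j i) := by
    simp only [pprTrunc, Pi.smul_apply, smul_eq_mul, ← hM]
    congr 1
    rw [Matrix.mulVec_single]
    simp [Matrix.sum_apply]
  have hsum : (M ^ 1) j i ≤ ∑ m ∈ Finset.range (L + 1), (M ^ m) j i := by
    apply Finset.single_le_sum (f := fun m => (M ^ m) j i)
    · intro m _
      exact pow_entry_nonneg M hMnn m j i
    · exact Finset.mem_range.mpr (by omega)
  have hadj : 1 / Real.log (((k : ℕ) : ℝ) + 2) ≤ adj P i j := by
    rw [adj]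
    have := Finset.single_le_sum
      (f := fun l : Fin K => if P i l = j then 1 / Real.log (((l : ℕ) : ℝ) + 2) else 0)
      (fun l _ => by split
                     · exact le_of_lt (div_pos one_pos (log_pos_aux l))
                     · exact le_refl 0)
      (Finset.mem_univ k)
    simpa [hj] using this
  have hM1 : c * ((Dconst K)⁻¹ * (1 / Real.log (((k : ℕ) : ℝ) + 2))) ≤ (M ^ 1) j i := by
    rw [pow_one, hM]
    simp only [Matrix.smul_apply, Matrix.transpose_apply, smul_eq_mul, normAdj,
      Matrix.smul_apply, smul_eq_mul]
    exact mul_le_mul_of_nonneg_left (mul_le_mul_of_nonneg_left hadj (inv_nonneg.mpr hD.le)) hc0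
  have heq : (1 - c) * c / (Dconst K * Real.log (((k : ℕ) : ℝ) + 2))
      = (1 - c) * (c * ((Dconst K)⁻¹ * (1 / Real.log (((k : ℕ) : ℝ) + 2)))) := by
    rw [div_eq_mul_inv, mul_inv, mul_assoc, one_div]
  rw [hval, heq]
  exact mul_le_mul_of_nonneg_left (le_trans hM1 hsum) (by linarith)
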